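/- Let x ∉ D. If both liminf_n G_n'(x) and limsup_n G_n'(x) are infinite (each equal to +∞ or −∞), where G_n'(x) = g_1'(x) + ⋯ + g_n'(x), then the Takagi function T is not approximately derivable at x (there is no real number L that is an approximate derivative of T at x). -/

import Mathlib

open MeasureTheory Filter Set

noncomputable section

/-- The set of dyadic numbers of level `n`: `{k / 2^n : k ∈ ℤ}`. -/
def Dset (n : ℕ) : Set ℝ := {y : ℝ | ∃ k : ℤ, y = (k : ℝ) / 2 ^ n}

/-- The set of all dyadic numbers. -/
def Ddyadic : Set ℝ := ⋃ n, Dset n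

/-- `g k x = dist(x, D_k)`. -/
def g (k : ℕ) (x : ℝ) : ℝ := Metric.infDist x (Dset k)

/-- The Takagi function `T x = ∑_{k=1}^∞ g_k(x)`. -/
def T (x : ℝ) : ℝ := ∑' k : ℕ, g (k + 1) x

/-- `G' n x = g_1'(x) + ⋯ + g_n'(x)` (so `G' 0 x = 0`). -/
def G' (n : ℕ) (x : ℝ) : ℝ := ∑ k ∈ Finset.range n, deriv (g (k + 1)) x

/-- `f` is approximately derivable at `x` with approximate derivative `L`:
for every `ε > 0`, the relative measure of the set of points `y` in `(x - r, x + r)`,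
`y ≠ x`, where `|(f y - f x - L (y - x)) / (y - x)| ≥ ε`, divided by `2r`,
tends to `0` as `r → 0⁺`. -/
def ApproxDerivAt (f : ℝ → ℝ) (x L : ℝ) : Prop :=
  ∀ ε > (0 : ℝ), Tendsto
    (fun r : ℝ => volume (Ioo (x - r) (x + r) ∩
        {y : ℝ | y ≠ x ∧ ε ≤ |(f y - f x - L * (y - x)) / (y - x)|}) /
      ENNReal.ofReal (2 * r))
    (nhdsWithin 0 (Ioi 0)) (nhds 0)

lemma Dset_nonempty (k : ℕ) : (Dset k).Nonempty := ⟨0, 0, by simp⟩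

lemma g_eq (k : ℕ) (y : ℝ) :
    g k y = min (y - (⌊(2:ℝ)^k * y⌋ : ℝ)/2^k) (((⌊(2:ℝ)^k * y⌋ : ℝ)+1)/2^k - y) := by
  have h2 : (0:ℝ) < 2^k := by positivity
  set m : ℤ := ⌊(2:ℝ)^k * y⌋ with hm
  have hm1 : (m:ℝ)/2^k ≤ y := by
    rw [div_le_iff₀ h2, mul_comm]; exact Int.floor_le _
  have hm2 : y < ((m:ℝ)+1)/2^k := by
    rw [lt_div_iff₀ h2, mul_comm]; exact Int.lt_floor_add_one _
  apply le_antisymm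
  · apply le_min
    · have h1 : g k y ≤ dist y ((m:ℝ)/2^k) := Metric.infDist_le_dist_of_mem ⟨m, rfl⟩
      rwa [Real.dist_eq, abs_of_nonneg (by linarith)] at h1
    · have h1 : g k y ≤ dist y (((m:ℝ)+1)/2^k) :=
        Metric.infDist_le_dist_of_mem ⟨m+1, by push_cast; ring⟩
      rw [Real.dist_eq, abs_of_nonpos (by linarith)] at h1
      linarith
  · by_contra h
    push_neg at h
    rw [g] at h
    obtain ⟨z, ⟨j, rfl⟩, hz⟩ := (Metric.infDist_lt_iff (Dset_nonempty k)).1 h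
    rw [Real.dist_eq] at hz
    rcases le_or_gt (j:ℝ) (m:ℝ) with hj | hj
    · have hj' : (j:ℝ)/2^k ≤ (m:ℝ)/2^k := by gcongr
      have h3 : y - (m:ℝ)/2^k ≤ |y - (j:ℝ)/2^k| := by
        rw [abs_of_nonneg (by linarith)]; linarith
      have := min_le_left (y - (m:ℝ)/2^k) (((m:ℝ)+1)/2^k - y)
      linarith
    · have hj2 : (m:ℝ)+1 ≤ (j:ℝ) := by exact_mod_cast hj
      have hj' : ((m:ℝ)+1)/2^k ≤ (j:ℝ)/2^k := by gcongr
      have h3 : ((m:ℝ)+1)/2^k - y ≤ |y - (j:ℝ)/2^k| := by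
        rw [abs_of_nonpos (by linarith)]; linarith
      have := min_le_right (y - (m:ℝ)/2^k) (((m:ℝ)+1)/2^k - y)
      linarith

lemma g_nonneg (k : ℕ) (y : ℝ) : 0 ≤ g k y := Metric.infDist_nonneg

lemma g_le (k : ℕ) (y : ℝ) : g k y ≤ (2:ℝ)⁻¹^(k+1) := by
  have h2 : (0:ℝ) < 2^k := by positivity
  have hpow : (2:ℝ)⁻¹^(k+1) = (1/2^k)/2 := by
    rw [pow_succ, inv_pow]; ring
  rw [g_eq, hpow]
  have l1 := min_le_left (y - (⌊(2:ℝ)^k * y⌋ : ℝ)/2^k) (((⌊(2:ℝ)^k * y⌋ : ℝ)+1)/2^k - y)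
  have l2 := min_le_right (y - (⌊(2:ℝ)^k * y⌋ : ℝ)/2^k) (((⌊(2:ℝ)^k * y⌋ : ℝ)+1)/2^k - y)
  have hsum : (y - (⌊(2:ℝ)^k * y⌋ : ℝ)/2^k) + (((⌊(2:ℝ)^k * y⌋ : ℝ)+1)/2^k - y) = 1/2^k := by
    field_simp; ring
  linarith


lemma floor_eq_of (N : ℤ) (d : ℕ) (z : ℝ) (h1 : (N:ℝ) ≤ 2^d * z) (h2 : 2^d * z < (N:ℝ) + 1) :
    ⌊z⌋ = ⌊(N:ℝ)/2^d⌋ := by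
  have h2d : (0:ℝ) < 2^d := by positivity
  set M : ℤ := ⌊(N:ℝ)/2^d⌋ with hM
  have hM1 : (M:ℝ) ≤ (N:ℝ)/2^d := Int.floor_le _
  have hM2 : (N:ℝ)/2^d < M + 1 := Int.lt_floor_add_one _
  have hNlt : (N:ℝ) + 1 ≤ ((M:ℝ)+1) * 2^d := by
    have h3 : (N:ℝ) < ((M:ℝ)+1) * 2^d := by
      rw [div_lt_iff₀ h2d] at hM2; linarith
    have hz : (N:ℤ) + 1 ≤ (M+1) * 2^d := Int.add_one_le_of_lt (by exact_mod_cast h3)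
    exact_mod_cast hz
  rw [Int.floor_eq_iff]
  constructor
  · calc (M:ℝ) ≤ (N:ℝ)/2^d := hM1
      _ ≤ z := by rw [div_le_iff₀ h2d]; linarith
  · have : 2^d * z < ((M:ℝ)+1) * 2^d := by linarith
    push_cast
    nlinarith


/-- slope of `g p` at `x`. -/
def sl (x : ℝ) (p : ℕ) : ℝ := if Int.fract ((2:ℝ)^p * x) < 1/2 then 1 else -1

/-- left endpoint of the level-`q` cell containing `x`. -/
def cellL (x : ℝ) (q : ℕ) : ℝ := (⌊(2:ℝ)^q * x⌋ : ℝ)/2^q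

lemma fract_pos {x : ℝ} (hx : x ∉ Ddyadic) (p : ℕ) : 0 < Int.fract ((2:ℝ)^p * x) := by
  rcases lt_or_eq_of_le (Int.fract_nonneg ((2:ℝ)^p * x)) with h | h
  · exact h
  · exfalso
    have h2 : (0:ℝ) < 2^p := by positivity
    have : (2:ℝ)^p * x = ⌊(2:ℝ)^p * x⌋ := by
      have h' := h.symm
      rw [Int.fract] at h'
      linarith
    exact hx (mem_iUnion.2 ⟨p, ⟨⌊(2:ℝ)^p * x⌋, by rw [eq_div_iff (ne_of_gt h2)]; linarith⟩⟩)

lemma fract_ne_half {x : ℝ} (hx : x ∉ Ddyadic) (p : ℕ) : Int.fract ((2:ℝ)^p * x) ≠ 1/2 := by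
  intro h
  have h2 : (0:ℝ) < 2^(p+1) := by positivity
  have hfr : (2:ℝ)^p * x - ⌊(2:ℝ)^p * x⌋ = 1/2 := by rw [Int.fract] at h; exact h
  refine hx (mem_iUnion.2 ⟨p+1, ⟨2 * ⌊(2:ℝ)^p * x⌋ + 1, ?_⟩⟩)
  rw [eq_div_iff (ne_of_gt h2)]
  push_cast
  rw [pow_succ] at *
  nlinarith [hfr]

lemma x_mem_cell (x : ℝ) (q : ℕ) : x ∈ Ico (cellL x q) (cellL x q + (2:ℝ)⁻¹^q) := by
  have h2 : (0:ℝ) < 2^q := by positivity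
  have e : (2:ℝ)⁻¹^q = 1/2^q := by rw [inv_pow]; ring
  constructor
  · rw [cellL, div_le_iff₀ h2, mul_comm]; exact Int.floor_le _
  · rw [cellL, e]
    have := Int.lt_floor_add_one ((2:ℝ)^q * x)
    rw [show (⌊(2:ℝ)^q * x⌋:ℝ)/2^q + 1/2^q = ((⌊(2:ℝ)^q * x⌋:ℝ) + 1)/2^q by ring,
      lt_div_iff₀ h2, mul_comm]
    exact this

lemma floor_cell {x : ℝ} {p q : ℕ} (hpq : p ≤ q) {y : ℝ}
    (hy : y ∈ Ico (cellL x q) (cellL x q + (2:ℝ)⁻¹^q)) :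
    ⌊(2:ℝ)^p * y⌋ = ⌊(2:ℝ)^p * x⌋ := by
  obtain ⟨d, rfl⟩ : ∃ d, q = d + p := ⟨q - p, by omega⟩
  have h2 : (0:ℝ) < 2^(d+p) := by positivity
  set N : ℤ := ⌊(2:ℝ)^(d+p) * x⌋ with hN
  have key : ∀ z : ℝ, (N:ℝ)/2^(d+p) ≤ z → z < (N:ℝ)/2^(d+p) + (2:ℝ)⁻¹^(d+p) →
      ⌊(2:ℝ)^p * z⌋ = ⌊(N:ℝ)/2^d⌋ := by
    intro z h1 h2'
    apply floor_eq_of N d ((2:ℝ)^p * z)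
    · rw [← mul_assoc, ← pow_add]
      rw [div_le_iff₀ h2] at h1; linarith [h1]
    · rw [← mul_assoc, ← pow_add]
      have e : (2:ℝ)⁻¹^(d+p) = 1/2^(d+p) := by rw [inv_pow]; ring
      rw [e] at h2'
      have h3 : ((N:ℝ) + 1)/2^(d+p) = (N:ℝ)/2^(d+p) + 1/2^(d+p) := by ring
      have h4 : z < ((N:ℝ)+1)/2^(d+p) := by rw [h3]; linarith
      rw [lt_div_iff₀ h2] at h4
      linarith
  rw [key y hy.1 hy.2, key x (x_mem_cell x (d+p)).1 (x_mem_cell x (d+p)).2]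

lemma floor_double_of_lt {z : ℝ} (h : Int.fract z < 1/2) : ⌊2*z⌋ = 2*⌊z⌋ := by
  have h1 : (⌊z⌋:ℝ) ≤ z := Int.floor_le z
  have h0 : z - ⌊z⌋ < 1/2 := by rw [Int.fract] at h; exact h
  rw [Int.floor_eq_iff]
  constructor <;> push_cast <;> linarith

lemma floor_double_of_ge {z : ℝ} (h : 1/2 ≤ Int.fract z) : ⌊2*z⌋ = 2*⌊z⌋ + 1 := by
  have h1 : Int.fract z < 1 := Int.fract_lt_one z
  rw [Int.fract] at h h1
  rw [Int.floor_eq_iff]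
  constructor <;> push_cast <;> linarith

lemma g_lin {x : ℝ} (hx : x ∉ Ddyadic) {p n : ℕ} (hpn : p ≤ n) {y : ℝ}
    (hy : y ∈ Ico (cellL x (n+1)) (cellL x (n+1) + (2:ℝ)⁻¹^(n+1))) :
    g p y - g p x = sl x p * (y - x) := by
  have h2 : (0:ℝ) < 2^p := by positivity
  have hfl : ⌊(2:ℝ)^p * y⌋ = ⌊(2:ℝ)^p * x⌋ := floor_cell (by omega) hy
  have hfl2 : ⌊(2:ℝ)^(p+1) * y⌋ = ⌊(2:ℝ)^(p+1) * x⌋ := floor_cell (by omega) hy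
  have hdbl : ∀ z : ℝ, (2:ℝ)^(p+1) * z = 2 * ((2:ℝ)^p * z) := by
    intro z; rw [pow_succ]; ring
  have hylb : ((⌊(2:ℝ)^p * x⌋:ℤ):ℝ) ≤ (2:ℝ)^p * y := by
    rw [← hfl]; exact Int.floor_le _
  have hxlb : ((⌊(2:ℝ)^p * x⌋:ℤ):ℝ) ≤ (2:ℝ)^p * x := Int.floor_le _
  have hyub : (2:ℝ)^p * y < (⌊(2:ℝ)^p * x⌋:ℝ) + 1 := by
    rw [← hfl]; exact Int.lt_floor_add_one _
  have hxub : (2:ℝ)^p * x < (⌊(2:ℝ)^p * x⌋:ℝ) + 1 := Int.lt_floor_add_one _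
  by_cases h : Int.fract ((2:ℝ)^p * x) < 1/2
  · have hx2 : ⌊(2:ℝ)^(p+1) * x⌋ = 2*⌊(2:ℝ)^p * x⌋ := by rw [hdbl, floor_double_of_lt h]
    have hyb : 2 * ((2:ℝ)^p * y) < 2*(⌊(2:ℝ)^p * x⌋:ℝ) + 1 := by
      have h5 := Int.lt_floor_add_one ((2:ℝ)^(p+1) * y)
      rw [hfl2, hx2] at h5; rw [← hdbl]; push_cast at h5 ⊢; linarith
    have hxb : 2 * ((2:ℝ)^p * x) < 2*(⌊(2:ℝ)^p * x⌋:ℝ) + 1 := by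
      have h5 := Int.lt_floor_add_one ((2:ℝ)^(p+1) * x)
      rw [hx2] at h5; rw [← hdbl]; push_cast at h5 ⊢; linarith
    have key : ∀ z : ℝ, 2 * ((2:ℝ)^p * z) < 2*(⌊(2:ℝ)^p * x⌋:ℝ) + 1 →
        ((⌊(2:ℝ)^p * x⌋:ℤ):ℝ) ≤ (2:ℝ)^p * z → ⌊(2:ℝ)^p * z⌋ = ⌊(2:ℝ)^p * x⌋ →
        g p z = z - (⌊(2:ℝ)^p * x⌋:ℝ)/2^p := by
      intro z hzb hzl hzf
      rw [g_eq, hzf, min_eq_left]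
      have e1 : (z - (⌊(2:ℝ)^p * x⌋:ℝ)/2^p) * 2^p = 2^p * z - ⌊(2:ℝ)^p * x⌋ := by
        field_simp; try ring
      have e2 : (((⌊(2:ℝ)^p * x⌋:ℝ)+1)/2^p - z) * 2^p = (⌊(2:ℝ)^p * x⌋:ℝ) + 1 - 2^p * z := by
        field_simp; try ring
      nlinarith
    rw [key y hyb hylb hfl, key x hxb hxlb rfl]
    simp only [sl, if_pos h]
    ring
  · have h' : 1/2 ≤ Int.fract ((2:ℝ)^p * x) := le_of_not_gt h
    have hx2 : ⌊(2:ℝ)^(p+1) * x⌋ = 2*⌊(2:ℝ)^p * x⌋ + 1 := by rw [hdbl, floor_double_of_ge h']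
    have hyb : 2*(⌊(2:ℝ)^p * x⌋:ℝ) + 1 ≤ 2 * ((2:ℝ)^p * y) := by
      have h6 : ⌊(2:ℝ)^(p+1) * y⌋ = 2*⌊(2:ℝ)^p * x⌋ + 1 := by rw [hfl2, hx2]
      have h5 : ((2*⌊(2:ℝ)^p * x⌋+1 : ℤ):ℝ) ≤ (2:ℝ)^(p+1) * y := by
        rw [← h6]; exact Int.floor_le _
      rw [hdbl] at h5; push_cast at h5 ⊢; linarith
    have hxb : 2*(⌊(2:ℝ)^p * x⌋:ℝ) + 1 ≤ 2 * ((2:ℝ)^p * x) := by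
      have h5 : ((2*⌊(2:ℝ)^p * x⌋+1 : ℤ):ℝ) ≤ (2:ℝ)^(p+1) * x := by
        rw [← hx2]; exact Int.floor_le _
      rw [hdbl] at h5; push_cast at h5 ⊢; linarith
    have key : ∀ z : ℝ, 2*(⌊(2:ℝ)^p * x⌋:ℝ) + 1 ≤ 2 * ((2:ℝ)^p * z) →
        (2:ℝ)^p * z < (⌊(2:ℝ)^p * x⌋:ℝ) + 1 → ⌊(2:ℝ)^p * z⌋ = ⌊(2:ℝ)^p * x⌋ →
        g p z = ((⌊(2:ℝ)^p * x⌋:ℝ)+1)/2^p - z := by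
      intro z hzb hzu hzf
      rw [g_eq, hzf, min_eq_right]
      have e1 : (z - (⌊(2:ℝ)^p * x⌋:ℝ)/2^p) * 2^p = 2^p * z - ⌊(2:ℝ)^p * x⌋ := by
        field_simp; try ring
      have e2 : (((⌊(2:ℝ)^p * x⌋:ℝ)+1)/2^p - z) * 2^p = (⌊(2:ℝ)^p * x⌋:ℝ) + 1 - 2^p * z := by
        field_simp; try ring
      nlinarith
    rw [key y hyb hyub hfl, key x hxb hxub rfl]
    simp only [sl, if_neg h]
    ring



lemma cellL_not_dyadic {x : ℝ} (hx : x ∉ Ddyadic) (q : ℕ) : x ≠ cellL x q := by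
  intro h
  exact hx (mem_iUnion.2 ⟨q, ⟨⌊(2:ℝ)^q*x⌋, h⟩⟩)

lemma g_deriv {x : ℝ} (hx : x ∉ Ddyadic) (p : ℕ) : deriv (g p) x = sl x p := by
  have hone : HasDerivAt (fun y => g p x + sl x p * (y - x)) (sl x p) x := by
    simpa using (((hasDerivAt_id x).sub_const x).const_mul (sl x p)).const_add (g p x)
  have hxI : x ∈ Ioo (cellL x (p+1)) (cellL x (p+1) + (2:ℝ)⁻¹^(p+1)) := by
    rcases x_mem_cell x (p+1) with ⟨h1, h2⟩
    exact ⟨lt_of_le_of_ne h1 (fun h => cellL_not_dyadic hx (p+1) h.symm), h2⟩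
  have hev : g p =ᶠ[nhds x] fun y => g p x + sl x p * (y - x) := by
    filter_upwards [Ioo_mem_nhds hxI.1 hxI.2] with y hy
    have := g_lin hx (le_refl p) (⟨le_of_lt hy.1, hy.2⟩ :
      y ∈ Ico (cellL x (p+1)) (cellL x (p+1) + (2:ℝ)⁻¹^(p+1)))
    linarith
  rw [hev.deriv_eq, hone.deriv]

lemma G'_eq {x : ℝ} (hx : x ∉ Ddyadic) (n : ℕ) :
    G' n x = ∑ k ∈ Finset.range n, sl x (k+1) := by
  unfold G'
  exact Finset.sum_congr rfl (fun k _ => g_deriv hx (k+1))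

lemma summable_g (y : ℝ) : Summable (fun k : ℕ => g (k+1) y) := by
  apply Summable.of_nonneg_of_le (fun k => g_nonneg (k+1) y) (fun k => g_le (k+1) y)
  have : Summable (fun k : ℕ => (2:ℝ)⁻¹^k) := summable_geometric_of_lt_one (by norm_num) (by norm_num)
  exact (this.mul_left ((2:ℝ)⁻¹^2)).congr (fun k => by rw [← pow_add]; ring_nf)

lemma summable_g' (y : ℝ) (n : ℕ) : Summable (fun k : ℕ => g (k+n+1) y) := by
  have := (summable_nat_add_iff (f := fun k : ℕ => g (k+1) y) n).2 (summable_g y)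
  exact this.congr (fun k => rfl)

lemma tail_bound (y : ℝ) (n : ℕ) :
    0 ≤ (∑' k : ℕ, g (k+n+1) y) ∧ (∑' k : ℕ, g (k+n+1) y) ≤ (2:ℝ)⁻¹^(n+1) := by
  constructor
  · exact tsum_nonneg (fun k => g_nonneg _ _)
  · have hsum : Summable (fun k : ℕ => g (k+n+1) y) := summable_g' y n
    have hgeo : Summable (fun k : ℕ => (2:ℝ)⁻¹^(k+n+2)) := by
      have : Summable (fun k : ℕ => (2:ℝ)⁻¹^k) := summable_geometric_of_lt_one (by norm_num) (by norm_num)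
      exact (this.mul_right ((2:ℝ)⁻¹^(n+2))).congr (fun k => by rw [← pow_add]; congr 1)
    have h1 : (∑' k : ℕ, g (k+n+1) y) ≤ ∑' k : ℕ, (2:ℝ)⁻¹^(k+n+2) := by
      apply Summable.tsum_le_tsum (fun k => ?_) hsum hgeo
      have := g_le (k+n+1) y
      exact this
    have h2 : (∑' k : ℕ, (2:ℝ)⁻¹^(k+n+2)) = (2:ℝ)⁻¹^(n+1) := by
      have : (∑' k : ℕ, (2:ℝ)⁻¹^(k+n+2)) = (∑' k : ℕ, (2:ℝ)⁻¹^k) * (2:ℝ)⁻¹^(n+2) := by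
        rw [← tsum_mul_right]
        exact tsum_congr (fun k => by rw [← pow_add]; congr 1)
      rw [this, tsum_geometric_of_lt_one (by norm_num) (by norm_num)]
      norm_num
      rw [pow_succ]
      ring
    linarith

lemma T_split (y : ℝ) (n : ℕ) :
    T y = (∑ k ∈ Finset.range n, g (k+1) y) + ∑' k : ℕ, g (k+n+1) y := by
  rw [T]
  rw [← Summable.sum_add_tsum_nat_add n (summable_g y)]


lemma T_est {x : ℝ} (hx : x ∉ Ddyadic) (n : ℕ) {y : ℝ}
    (hy : y ∈ Ico (cellL x (n+1)) (cellL x (n+1) + (2:ℝ)⁻¹^(n+1))) :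
    |T y - T x - G' n x * (y - x)| ≤ (2:ℝ)⁻¹^(n+1) := by
  have hsum : (∑ k ∈ Finset.range n, g (k+1) y) - (∑ k ∈ Finset.range n, g (k+1) x)
      = G' n x * (y - x) := by
    rw [← Finset.sum_sub_distrib, G'_eq hx, Finset.sum_mul]
    exact Finset.sum_congr rfl (fun k hk => by
      exact g_lin hx (by simp at hk; omega) hy)
  have hRy := tail_bound y n
  have hRx := tail_bound x n
  rw [T_split y n, T_split x n]
  rw [abs_le]
  constructor <;> nlinarith [hsum, hRy.1, hRy.2, hRx.1, hRx.2]

lemma fract_succ_lt {x : ℝ} {p : ℕ} (h : Int.fract ((2:ℝ)^p * x) < 1/2) :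
    Int.fract ((2:ℝ)^(p+1)*x) = 2 * Int.fract ((2:ℝ)^p * x) := by
  have e : (2:ℝ)^(p+1)*x = ((2*⌊(2:ℝ)^p*x⌋ : ℤ):ℝ) + 2*Int.fract ((2:ℝ)^p*x) := by
    push_cast; rw [Int.fract, pow_succ]; ring
  rw [e, Int.fract_intCast_add, Int.fract_eq_self.2
    ⟨by linarith [Int.fract_nonneg ((2:ℝ)^p*x)], by linarith⟩]

lemma fract_succ_ge {x : ℝ} {p : ℕ} (h : 1/2 ≤ Int.fract ((2:ℝ)^p * x)) :
    Int.fract ((2:ℝ)^(p+1)*x) = 2 * Int.fract ((2:ℝ)^p * x) - 1 := by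
  have e : (2:ℝ)^(p+1)*x = ((2*⌊(2:ℝ)^p*x⌋+1 : ℤ):ℝ) + (2*Int.fract ((2:ℝ)^p*x) - 1) := by
    push_cast; rw [Int.fract, pow_succ]; ring
  rw [e, Int.fract_intCast_add, Int.fract_eq_self.2
    ⟨by linarith, by linarith [Int.fract_lt_one ((2:ℝ)^p*x)]⟩]

/-- level `m` is good if `x` sits in the middle half of its level-`(m+1)` cell. -/
def goodm (x : ℝ) (m : ℕ) : Prop := Int.fract ((2:ℝ)^(m+1)*x) ∈ Icc (1/4:ℝ) (3/4)

lemma good_infinite {x : ℝ} (hx : x ∉ Ddyadic) (N : ℕ) : ∃ m, N ≤ m ∧ goodm x m := by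
  by_contra h
  push_neg at h
  -- all levels ≥ N are bad
  have hbad : ∀ m, N ≤ m → Int.fract ((2:ℝ)^(m+1)*x) < 1/4 ∨ 3/4 < Int.fract ((2:ℝ)^(m+1)*x) := by
    intro m hm
    have := h m hm
    rw [goodm, mem_Icc] at this
    by_cases h1 : Int.fract ((2:ℝ)^(m+1)*x) < 1/4
    · exact Or.inl h1
    · exact Or.inr (by push_neg at h1 this; exact this h1)
  rcases hbad N le_rfl with h0 | h0
  · -- doubling regime near left endpoint
    have key : ∀ t : ℕ, Int.fract ((2:ℝ)^(N+1+t)*x) = 2^t * Int.fract ((2:ℝ)^(N+1)*x) ∧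
        Int.fract ((2:ℝ)^(N+1+t)*x) < 1/4 := by
      intro t
      induction t with
      | zero => simpa using h0
      | succ t ih =>
        have hlt : Int.fract ((2:ℝ)^(N+1+t)*x) < 1/2 := by linarith [ih.2]
        have e1 : Int.fract ((2:ℝ)^(N+1+(t+1))*x) = 2 * Int.fract ((2:ℝ)^(N+1+t)*x) := by
          have := fract_succ_lt hlt
          rw [show N+1+(t+1) = (N+1+t)+1 by omega]
          exact this
        have e2 : Int.fract ((2:ℝ)^(N+1+(t+1))*x) = 2^(t+1) * Int.fract ((2:ℝ)^(N+1)*x) := by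
          rw [e1, ih.1, pow_succ]; ring
        refine ⟨e2, ?_⟩
        rcases hbad (N+t+1) (by omega) with h1 | h1
        · rw [show N+t+1+1 = N+1+(t+1) by omega] at h1; exact h1
        · exfalso
          rw [show N+t+1+1 = N+1+(t+1) by omega] at h1
          rw [e1] at h1
          linarith [ih.2]
    have hpos : 0 < Int.fract ((2:ℝ)^(N+1)*x) := fract_pos hx (N+1)
    obtain ⟨t, ht⟩ := pow_unbounded_of_one_lt ((1/4)/Int.fract ((2:ℝ)^(N+1)*x)) (by norm_num : (1:ℝ) < 2)
    have := (key t).2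
    rw [(key t).1] at this
    rw [div_lt_iff₀ hpos] at ht
    linarith
  · -- doubling regime near right endpoint
    have key : ∀ t : ℕ, (1 - Int.fract ((2:ℝ)^(N+1+t)*x)) = 2^t * (1 - Int.fract ((2:ℝ)^(N+1)*x)) ∧
        3/4 < Int.fract ((2:ℝ)^(N+1+t)*x) := by
      intro t
      induction t with
      | zero => simpa using h0
      | succ t ih =>
        have hge : 1/2 ≤ Int.fract ((2:ℝ)^(N+1+t)*x) := by linarith [ih.2]
        have e1 : Int.fract ((2:ℝ)^(N+1+(t+1))*x) = 2 * Int.fract ((2:ℝ)^(N+1+t)*x) - 1 := by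
          have := fract_succ_ge hge
          rw [show N+1+(t+1) = (N+1+t)+1 by omega]
          exact this
        have e2 : (1 - Int.fract ((2:ℝ)^(N+1+(t+1))*x)) = 2^(t+1) * (1 - Int.fract ((2:ℝ)^(N+1)*x)) := by
          rw [e1]
          have := ih.1
          rw [pow_succ]
          nlinarith [ih.1]
        refine ⟨e2, ?_⟩
        rcases hbad (N+t+1) (by omega) with h1 | h1
        · exfalso
          rw [show N+t+1+1 = N+1+(t+1) by omega] at h1
          rw [e1] at h1
          linarith [ih.2]
        · rw [show N+t+1+1 = N+1+(t+1) by omega] at h1; exact h1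
    have hlt1 : Int.fract ((2:ℝ)^(N+1)*x) < 1 := Int.fract_lt_one _
    have hpos : 0 < 1 - Int.fract ((2:ℝ)^(N+1)*x) := by linarith
    obtain ⟨t, ht⟩ := pow_unbounded_of_one_lt ((1/4)/(1 - Int.fract ((2:ℝ)^(N+1)*x))) (by norm_num : (1:ℝ) < 2)
    have := (key t).2
    have h2 := (key t).1
    rw [div_lt_iff₀ hpos] at ht
    linarith

lemma bad_slope {x : ℝ} {m : ℕ} (h : ¬ goodm x m) :
    sl x (m+2) = sl x (m+1) := by
  rw [goodm, mem_Icc] at h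
  push_neg at h
  show sl x ((m+1)+1) = sl x (m+1)
  by_cases h1 : Int.fract ((2:ℝ)^(m+1)*x) < 1/4
  · have hlt : Int.fract ((2:ℝ)^(m+1)*x) < 1/2 := by linarith
    have e1 := fract_succ_lt hlt
    have c2 : Int.fract ((2:ℝ)^((m+1)+1)*x) < 1/2 := by rw [e1]; linarith
    simp only [sl, if_pos hlt, if_pos c2]
  · have h2 : 3/4 < Int.fract ((2:ℝ)^(m+1)*x) := h (by push_neg at h1; exact h1)
    have hge : 1/2 ≤ Int.fract ((2:ℝ)^(m+1)*x) := by linarith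
    have e1 := fract_succ_ge hge
    have c2 : ¬ (Int.fract ((2:ℝ)^((m+1)+1)*x) < 1/2) := by rw [e1]; push_neg; linarith
    simp only [sl, if_neg (not_lt.2 hge), if_neg c2]

lemma sl_cases (x : ℝ) (p : ℕ) : sl x p = 1 ∨ sl x p = -1 := by
  rw [sl]; split <;> simp

lemma G'_succ {x : ℝ} (hx : x ∉ Ddyadic) (n : ℕ) : G' (n+1) x = G' n x + sl x (n+1) := by
  rw [G'_eq hx, G'_eq hx, Finset.sum_range_succ]

lemma window {x : ℝ} (hx : x ∉ Ddyadic) {j q : ℕ} (hjq : j < q)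
    (hbad : ∀ k, j < k → k < q → ¬ goodm x k) {L C : ℝ} (hC : 0 ≤ C)
    (hj : |G' j x - L| ≤ C) (hq : |G' q x - L| ≤ C) :
    ∀ m, j ≤ m → m ≤ q → |G' m x - L| ≤ C + 1 := by
  set σ := sl x (j+2) with hσ
  have claim1 : ∀ k, j+1 ≤ k → k ≤ q → sl x (k+1) = σ := by
    intro k hk1 hk2
    induction k with
    | zero => omega
    | succ t ih =>
      rcases Nat.lt_or_ge (j+1) (t+1) with h | h
      · have ht1 : j+1 ≤ t := by omega
        have ht2 : t ≤ q := by omega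
        have hbt : ¬ goodm x t := hbad t (by omega) (by omega)
        have := bad_slope hbt
        rw [show t+2 = (t+1)+1 by omega] at this
        rw [this]
        exact ih ht1 ht2
      · have : t + 1 = j + 1 := by omega
        rw [this]
  have claim2 : ∀ d : ℕ, j+1+d ≤ q → G' (j+1+d) x = G' (j+1) x + σ * d := by
    intro d hd
    induction d with
    | zero => simp
    | succ e ih =>
      have h1 : G' (j+1+(e+1)) x = G' (j+1+e) x + sl x (j+1+e+1) := by
        rw [show j+1+(e+1) = (j+1+e)+1 by omega]
        exact G'_succ hx _
      rw [h1, claim1 (j+1+e) (by omega) (by omega), ih (by omega)]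
      push_cast; ring
  intro m hm1 hm2
  rcases Nat.eq_or_lt_of_le hm1 with rfl | hjm
  · linarith
  -- j < m ≤ q
  obtain ⟨d, rfl⟩ : ∃ d, m = j+1+d := ⟨m - (j+1), by omega⟩
  obtain ⟨e, hqe⟩ : ∃ e, q = j+1+e := ⟨q - (j+1), by omega⟩
  have hde : d ≤ e := by omega
  have h2 := claim2 d (by omega)
  have h3 := claim2 e (by omega)
  rw [← hqe] at h3
  have hj1 : |G' (j+1) x - L| ≤ C + 1 := by
    have := G'_succ hx j
    rcases sl_cases x (j+1) with h | h <;> rw [h] at this <;>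
      rw [abs_le] at hj ⊢ <;> constructor <;> linarith [hj.1, hj.2]
  have hde' : (d:ℝ) ≤ (e:ℝ) := by exact_mod_cast hde
  have hd0 : (0:ℝ) ≤ (d:ℝ) := Nat.cast_nonneg d
  rcases sl_cases x (j+2) with h | h <;> rw [← hσ] at h <;> rw [h] at h2 h3 <;>
    rw [abs_le] at hj1 hq ⊢ <;> constructor <;> nlinarith [hj1.1, hj1.2, hq.1, hq.2]

open Classical in
lemma global_bound {x : ℝ} (hx : x ∉ Ddyadic) {L : ℝ} {N : ℕ}
    (h9 : ∀ m, N ≤ m → goodm x m → |G' m x - L| ≤ 9) :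
    ∃ B : ℝ, ∀ m : ℕ, |G' m x| ≤ B := by
  obtain ⟨N₁, hN₁, hgood₁⟩ := good_infinite hx (N+1)
  have main : ∀ m, N₁ ≤ m → |G' m x - L| ≤ 10 := by
    intro m hm
    by_cases hgm : goodm x m
    · have := h9 m (by omega) hgm; linarith
    · set j := Nat.findGreatest (fun t => goodm x t) m with hj
      have hjN : N₁ ≤ j := Nat.le_findGreatest hm hgood₁
      have hjm : j ≤ m := Nat.findGreatest_le m
      have hjgood : goodm x j := Nat.findGreatest_spec hm hgood₁
      have hbad1 : ∀ k, j < k → k ≤ m → ¬ goodm x k := fun k h1 h2 =>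
        Nat.findGreatest_is_greatest h1 h2
      -- least good level above m
      have hexq : ∃ t : ℕ, goodm x (m+1+t) := by
        obtain ⟨q₀, hq₀1, hq₀2⟩ := good_infinite hx (m+1)
        exact ⟨q₀ - (m+1), by rw [show m+1+(q₀-(m+1)) = q₀ by omega]; exact hq₀2⟩
      set t₀ := Nat.find hexq with ht₀
      set q := m+1+t₀ with hqdef
      have hqgood : goodm x q := Nat.find_spec hexq
      have hbad2 : ∀ k, m < k → k < q → ¬ goodm x k := by
        intro k h1 h2
        have : ¬ goodm x (m+1+(k-(m+1))) := Nat.find_min hexq (by omega)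
        rwa [show m+1+(k-(m+1)) = k by omega] at this
      have hbad3 : ∀ k, j < k → k < q → ¬ goodm x k := by
        intro k h1 h2
        rcases Nat.lt_or_ge m k with h | h
        · exact hbad2 k h h2
        · exact hbad1 k h1 h
      have hjq : j < q := by omega
      have hjb : |G' j x - L| ≤ 9 := h9 j (by omega) hjgood
      have hqb : |G' q x - L| ≤ 9 := h9 q (by omega) hqgood
      have := window hx hjq hbad3 (by norm_num) hjb hqb m hjm (by omega)
      linarith
  refine ⟨|L| + 10 + ∑ t ∈ Finset.range (N₁+1), |G' t x|, fun m => ?_⟩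
  have hsumnn : (0:ℝ) ≤ ∑ t ∈ Finset.range (N₁+1), |G' t x| :=
    Finset.sum_nonneg (fun t _ => abs_nonneg _)
  rcases Nat.lt_or_ge m (N₁+1) with h | h
  · have h1 : |G' m x| ≤ ∑ t ∈ Finset.range (N₁+1), |G' t x| :=
      Finset.single_le_sum (fun t _ => abs_nonneg (G' t x)) (Finset.mem_range.2 h)
    have : (0:ℝ) ≤ |L| + 10 := by positivity
    linarith
  · have h1 := main m (by omega)
    have h2 : |G' m x| ≤ |G' m x - L| + |L| := by
      have := abs_add_le (G' m x - L) L
      simpa using this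
    linarith

lemma good_estimate {x : ℝ} (hx : x ∉ Ddyadic) {L : ℝ} {m : ℕ} (hg : goodm x m)
    (hb : 9 ≤ |G' m x - L|) :
    ∀ y, y ∈ Ico (x + (2:ℝ)⁻¹^(m+4)) (x + (2:ℝ)⁻¹^(m+3)) →
      y ≠ x ∧ 1 ≤ |(T y - T x - L * (y - x)) / (y - x)| := by
  intro y hy
  set ℓ : ℝ := (2:ℝ)⁻¹^(m+1) with hℓ
  have hℓ0 : 0 < ℓ := by positivity
  have e3 : (2:ℝ)⁻¹^(m+3) = ℓ/4 := by rw [hℓ, pow_succ, pow_succ]; ring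
  have e4 : (2:ℝ)⁻¹^(m+4) = ℓ/8 := by rw [hℓ, pow_succ, pow_succ, pow_succ]; ring
  rw [e3, e4] at hy
  obtain ⟨hy1, hy2⟩ := hy
  -- x's position in its cell
  have hcell := x_mem_cell x (m+1)
  have hfr : Int.fract ((2:ℝ)^(m+1)*x) = 2^(m+1)*(x - cellL x (m+1)) := by
    rw [Int.fract, cellL]
    have h2 : (0:ℝ) < 2^(m+1) := by positivity
    field_simp
  have hpow : (2:ℝ)^(m+1) * ℓ = 1 := by
    rw [hℓ, ← mul_pow]; norm_num
  rw [goodm, mem_Icc, hfr] at hg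
  have hxpos : x - cellL x (m+1) ≤ 3/4 * ℓ := by
    nlinarith [hg.2, hℓ0]
  -- y is in the cell of level m+1
  have hyc : y ∈ Ico (cellL x (m+1)) (cellL x (m+1) + (2:ℝ)⁻¹^(m+1)) := by
    constructor
    · have := hcell.1; linarith
    · rw [← hℓ]; linarith
  have hest := T_est hx m hyc
  rw [← hℓ] at hest
  have hyx : ℓ/8 ≤ y - x := by linarith
  have hyx2 : y - x < ℓ/4 := by linarith
  have hyne : y ≠ x := by intro h; rw [h] at hyx; linarith
  refine ⟨hyne, ?_⟩
  have key : |y - x| ≤ |T y - T x - L * (y - x)| := by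
    have h3 : |(G' m x - L)*(y-x)| ≤ |T y - T x - L*(y-x)| + |T y - T x - G' m x*(y-x)| := by
      have h4 := abs_add_le (T y - T x - L*(y-x)) (-(T y - T x - G' m x*(y-x)))
      rw [abs_neg] at h4
      calc |(G' m x - L)*(y-x)| = |(T y - T x - L*(y-x)) + -(T y - T x - G' m x*(y-x))| := by
            congr 1; ring
        _ ≤ _ := h4
    rw [abs_mul] at h3
    have h5 : |y - x| = y - x := abs_of_pos (by linarith)
    rw [h5] at h3 ⊢
    nlinarith [hest, hb, hyx, hℓ0]
  rw [abs_div]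
  rw [le_div_iff₀ (by rw [abs_of_pos (by linarith : (0:ℝ) < y - x)]; linarith)]
  linarith [key]

lemma density_step {x L : ℝ} (hx : x ∉ Ddyadic) (hap : ApproxDerivAt T x L) :
    ∃ N : ℕ, ∀ m, N ≤ m → goodm x m → |G' m x - L| ≤ 9 := by
  have h1 := hap 1 one_pos
  have hc : (0:ENNReal) < ENNReal.ofReal (1/4) := by norm_num
  have hev := h1.eventually (gt_mem_nhds hc)
  rw [eventually_nhdsWithin_iff, Metric.eventually_nhds_iff] at hev
  obtain ⟨δ, hδ, hδ'⟩ := hev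
  obtain ⟨N, hN⟩ : ∃ N:ℕ, (2:ℝ)⁻¹^N < δ :=
    exists_pow_lt_of_lt_one hδ (by norm_num)
  refine ⟨N, fun m hm hg => ?_⟩
  by_contra hb
  push_neg at hb
  set r : ℝ := (2:ℝ)⁻¹^(m+3) with hr
  have hr0 : 0 < r := by positivity
  have hrδ : dist r 0 < δ := by
    rw [Real.dist_eq, sub_zero, abs_of_pos hr0]
    calc r ≤ (2:ℝ)⁻¹^N := by
          apply pow_le_pow_of_le_one (by norm_num) (by norm_num) (by omega)
      _ < δ := hN
  have hlt := hδ' hrδ (mem_Ioi.2 hr0)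
  -- now derive a lower bound on the ratio
  have hge := good_estimate hx hg (le_of_lt hb)
  have hsub : Ico (x + r/2) (x + r) ⊆ Ioo (x - r) (x + r) ∩
      {y : ℝ | y ≠ x ∧ 1 ≤ |(T y - T x - L * (y - x)) / (y - x)|} := by
    intro y hy
    have h2 : r/2 = (2:ℝ)⁻¹^(m+4) := by rw [hr, pow_succ]; ring
    have h3 := hge y (by rw [← h2] at *; exact hy)
    refine ⟨⟨?_, ?_⟩, h3⟩
    · linarith [hy.1]
    · exact hy.2
  have hvol : ENNReal.ofReal (r/2) ≤ volume (Ioo (x - r) (x + r) ∩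
      {y : ℝ | y ≠ x ∧ 1 ≤ |(T y - T x - L * (y - x)) / (y - x)|}) := by
    have := measure_mono (μ := volume) hsub
    rwa [Real.volume_Ico, show x + r - (x + r/2) = r/2 by ring] at this
  have hratio : ENNReal.ofReal (1/4) ≤ volume (Ioo (x - r) (x + r) ∩
      {y : ℝ | y ≠ x ∧ 1 ≤ |(T y - T x - L * (y - x)) / (y - x)|}) / ENNReal.ofReal (2*r) := by
    have h6 : ENNReal.ofReal (1/4) = ENNReal.ofReal (r/2) / ENNReal.ofReal (2*r) := by
      rw [← ENNReal.ofReal_div_of_pos (by linarith)]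
      congr 1
      field_simp
      ring
    rw [h6]
    exact ENNReal.div_le_div_right hvol _
  exact absurd hlt (not_lt.2 hratio)

theorem takagi_not_approx_deriv_of_infinite_limits (x : ℝ) (hx : x ∉ Ddyadic)
    (hI : liminf (fun n : ℕ => ((G' n x : ℝ) : EReal)) atTop = ⊤ ∨
          liminf (fun n : ℕ => ((G' n x : ℝ) : EReal)) atTop = ⊥)
    (hS : limsup (fun n : ℕ => ((G' n x : ℝ) : EReal)) atTop = ⊤ ∨
          limsup (fun n : ℕ => ((G' n x : ℝ) : EReal)) atTop = ⊥) :
    ¬ ∃ L : ℝ, ApproxDerivAt T x L := by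
  rintro ⟨L, hap⟩
  obtain ⟨N, h9⟩ := density_step hx hap
  obtain ⟨B, hB⟩ := global_bound hx h9
  have hub : ∀ n : ℕ, ((G' n x : ℝ) : EReal) ≤ ((B : ℝ) : EReal) := by
    intro n
    exact_mod_cast (le_of_abs_le (hB n) : G' n x ≤ B)
  have hlb : ∀ n : ℕ, (((-B : ℝ)) : EReal) ≤ ((G' n x : ℝ) : EReal) := by
    intro n
    exact_mod_cast (neg_le_of_abs_le (hB n) : -B ≤ G' n x)
  have hsup : limsup (fun n : ℕ => ((G' n x : ℝ) : EReal)) atTop ≤ ((B:ℝ) : EReal) :=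
    limsup_le_of_le (by isBoundedDefault) (Eventually.of_forall hub)
  have hinf : (((-B : ℝ)) : EReal) ≤ liminf (fun n : ℕ => ((G' n x : ℝ) : EReal)) atTop :=
    le_liminf_of_le (by isBoundedDefault) (Eventually.of_forall hlb)
  have hcmp : liminf (fun n : ℕ => ((G' n x : ℝ) : EReal)) atTop ≤
      limsup (fun n : ℕ => ((G' n x : ℝ) : EReal)) atTop := liminf_le_limsup
  rcases hS with h | h
  · rw [h] at hsup
    exact absurd hsup (not_le.2 (EReal.coe_lt_top B))
  · rw [h] at hcmp
    have := le_trans hinf hcmp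
    exact absurd this (not_le.2 (EReal.bot_lt_coe (-B)))
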